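/- Let f be a derivation of N. (i) If block t contains at least two indices (#{s : b s = t} ≥ 2), then for every A ∈ N^{t−1,t} and all indices r, s with b r = 1 and b s = t−1, the entry f(A) r s is zero. (ii) If block t consists of a single index s₁, then, writing F_w ∈ N^{t−1,t} for the matrix with entry 1 in position (w, s₁) and 0 elsewhere (for any w with b w = t−1), one has f(F_u) r v = f(F_v) r u for all indices u, v with b u = b v = t−1 and every index r with b r = 1. -/

import Mathlib

/-- `A` is a strictly block upper triangular matrix relative to the block function `b`
(index `r` lies in block `b r`): `A r s = 0` whenever `b r ≥ b s`. -/
def InN {F : Type*} [Field F] {n : ℕ} (b : Fin n → ℕ)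
    (A : Matrix (Fin n) (Fin n) F) : Prop :=
  ∀ r s, b s ≤ b r → A r s = 0

/-- `A` lies in the `(i,j)` block `N^{ij}`: `A r s = 0` unless `b r = i` and `b s = j`. -/
def InBlk {F : Type*} [Field F] {n : ℕ} (b : Fin n → ℕ) (i j : ℕ)
    (A : Matrix (Fin n) (Fin n) F) : Prop :=
  ∀ r s, ¬(b r = i ∧ b s = j) → A r s = 0

/-- `f` is a derivation of the Lie algebra `N` of strictly block upper triangular matrices:
it maps `N` into `N` and satisfies `f [X,Y] = [f X, Y] + [X, f Y]` on `N`,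
where `[X,Y] = XY - YX`. -/
def IsDerN {F : Type*} [Field F] {n : ℕ} (b : Fin n → ℕ)
    (f : Matrix (Fin n) (Fin n) F →ₗ[F] Matrix (Fin n) (Fin n) F) : Prop :=
  (∀ A, InN b A → InN b (f A)) ∧
  ∀ X Y, InN b X → InN b Y →
    f (X * Y - Y * X) = (f X * Y - Y * f X) + (X * f Y - f Y * X)

open Matrix in
lemma key_identity {F : Type*} [Field F] {n t : ℕ} (b : Fin n → ℕ)
    (ht : 3 ≤ t)
    (f : Matrix (Fin n) (Fin n) F →ₗ[F] Matrix (Fin n) (Fin n) F)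
    (hf : IsDerN b f)
    (A : Matrix (Fin n) (Fin n) F) (hA : InBlk b (t - 1) t A)
    (r s s' : Fin n) (hr : b r = 1) (hs : b s = t - 1) (hs' : b s' = t) :
    f A r s = ∑ k, f (single s s' (1 : F)) r k * A k s' := by
  set E := single s s' (1 : F) with hE
  have hAN : InN b A := fun p q hpq => hA p q (by rintro ⟨h1, h2⟩; omega)
  have hEN : InN b E := by
    intro p q hpq
    refine single_apply_of_ne _ _ _ _ _ ?_
    rintro ⟨rfl, rfl⟩; omega
  have hAE : A * E = 0 := by
    ext p q
    rcases eq_or_ne q s' with rfl | hq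
    · rw [hE, mul_single_apply_same, hA p s (by rintro ⟨h1, h2⟩; omega),
        zero_mul, Matrix.zero_apply]
    · rw [hE, mul_single_apply_of_ne _ _ _ _ _ hq, Matrix.zero_apply]
  have hEA : E * A = 0 := by
    ext p q
    rcases eq_or_ne p s with rfl | hp
    · rw [hE, single_mul_apply_same, hA s' q (by rintro ⟨h1, h2⟩; omega),
        mul_zero, Matrix.zero_apply]
    · rw [hE, single_mul_apply_of_ne _ _ _ _ _ hp, Matrix.zero_apply]
  have h := hf.2 A E hAN hEN
  rw [hAE, hEA, sub_zero, map_zero] at h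
  have h' := congrArg (fun M => M r s') h.symm
  simp only [Matrix.add_apply, Matrix.sub_apply, Matrix.zero_apply] at h'
  have h1 : (f A * E) r s' = f A r s := by
    rw [hE, mul_single_apply_same, mul_one]
  have h2 : (E * f A) r s' = 0 := by
    have hrs : r ≠ s := by intro h; rw [h] at hr; omega
    rw [hE, single_mul_apply_of_ne _ _ _ _ _ hrs]
  have h3 : (A * f E) r s' = 0 := by
    rw [Matrix.mul_apply]
    exact Finset.sum_eq_zero fun k _ => by
      rw [hA r k (by rintro ⟨h1, h2⟩; omega), zero_mul]
  have h4 : (f E * A) r s' = ∑ k, f E r k * A k s' := Matrix.mul_apply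
  rw [h1, h2, h3, h4] at h'
  linear_combination h'

/-- for a derivation `f` of `N`: (i) if block `t` has at least two indices
then the `(1,t-1)` block of `f(N^{t-1,t})` vanishes; (ii) if block `t` is a single index
`s₁`, then `f(F_u) r v = f(F_v) r u` for `b u = b v = t-1`, `b r = 1`, where
`F_w` has entry 1 at `(w, s₁)` and 0 elsewhere. -/
theorem stmt10 {F : Type*} [Field F] {n t : ℕ} (b : Fin n → ℕ)
    (hn : 1 ≤ n) (ht : 3 ≤ t) (hmono : Monotone b)
    (hlb : ∀ r, 1 ≤ b r) (hub : ∀ r, b r ≤ t)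
    (hsurj : ∀ k, 1 ≤ k → k ≤ t → ∃ r, b r = k)
    (f : Matrix (Fin n) (Fin n) F →ₗ[F] Matrix (Fin n) (Fin n) F)
    (hf : IsDerN b f) :
    (2 ≤ (Finset.univ.filter fun s => b s = t).card →
      ∀ A, InBlk b (t - 1) t A → ∀ r s, b r = 1 → b s = t - 1 → f A r s = 0) ∧
    (∀ s₁ : Fin n, b s₁ = t → (Finset.univ.filter fun s => b s = t).card = 1 →
      ∀ u v, b u = t - 1 → b v = t - 1 → ∀ r, b r = 1 →
        f (Matrix.single u s₁ (1 : F)) r v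
          = f (Matrix.single v s₁ (1 : F)) r u) := by
  classical
  constructor
  · intro hcard A hA r s hr hs
    have hstd : ∀ u w : Fin n, b u = t - 1 → b w = t →
        f (Matrix.single u w (1 : F)) r s = 0 := by
      intro u w hu hw
      obtain ⟨s', hs'mem, hs'ne⟩ :=
        Finset.exists_mem_ne (by omega : 1 < (Finset.univ.filter fun s => b s = t).card) w
      simp only [Finset.mem_filter] at hs'mem
      have hs' : b s' = t := hs'mem.2
      have hblk : InBlk b (t - 1) t (Matrix.single u w (1 : F)) := by
        intro p q hpq
        exact Matrix.single_apply_of_ne _ _ _ _ _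
          (by rintro ⟨rfl, rfl⟩; exact hpq ⟨hu, hw⟩)
      rw [key_identity b ht f hf _ hblk r s s' hr hs hs']
      refine Finset.sum_eq_zero fun k _ => ?_
      rw [Matrix.single_apply_of_ne _ _ _ _ _
        (by rintro ⟨rfl, rfl⟩; exact hs'ne rfl), mul_zero]
    have hdecomp : f A = ∑ u, ∑ w, A u w • f (Matrix.single u w (1 : F)) := by
      conv_lhs => rw [Matrix.matrix_eq_sum_single A]
      rw [map_sum]
      refine Finset.sum_congr rfl fun u _ => ?_
      rw [map_sum]
      refine Finset.sum_congr rfl fun w _ => ?_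
      rw [show Matrix.single u w (A u w) = A u w • Matrix.single u w (1 : F) by
        rw [Matrix.smul_single, smul_eq_mul, mul_one], map_smul]
    rw [hdecomp]
    simp only [Matrix.sum_apply, Matrix.smul_apply, smul_eq_mul]
    refine Finset.sum_eq_zero fun u _ => Finset.sum_eq_zero fun w _ => ?_
    by_cases huw : b u = t - 1 ∧ b w = t
    · rw [hstd u w huw.1 huw.2, mul_zero]
    · rw [hA u w huw, zero_mul]
  · intro s₁ hs₁ _ u v hu hv r hr
    have hblk : InBlk b (t - 1) t (Matrix.single u s₁ (1 : F)) := by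
      intro p q hpq
      exact Matrix.single_apply_of_ne _ _ _ _ _
        (by rintro ⟨rfl, rfl⟩; exact hpq ⟨hu, hs₁⟩)
    rw [key_identity b ht f hf _ hblk r v s₁ hr hv hs₁]
    rw [Finset.sum_eq_single_of_mem u (Finset.mem_univ u)]
    · rw [Matrix.single_apply_same, mul_one]
    · intro k _ hk
      rw [Matrix.single_apply_of_ne _ _ _ _ _
        (by rintro ⟨rfl, -⟩; exact hk rfl), mul_zero]
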